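/- For every φ ∈ C_c^∞(ℝ³,ℂ) and every b > 0 one has ‖∂₃φ‖² − b ∫_ℝ ( ∫_{ℝ²} |φ(x_⊥,x₃)|² dx_⊥ )² dx₃ ≥ − (b²/12) ‖φ‖⁶, where ‖·‖ denotes the L²(ℝ³) norm and ∂₃φ is the partial derivative of φ with respect to the third variable. -/

import Mathlib

open MeasureTheory

noncomputable section

/-- We model `ℝ³` as `(ℝ × ℝ) × ℝ`, writing `x = (x_⊥, x₃)`. -/
abbrev R3 := (ℝ × ℝ) × ℝ

/-- The Euclidean norm `|x|` on `ℝ³`. -/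
def enorm3 (x : R3) : ℝ := Real.sqrt (x.1.1 ^ 2 + x.1.2 ^ 2 + x.2 ^ 2)

/-- The partial derivative `∂₁φ`. -/
def d1 (φ : R3 → ℂ) (x : R3) : ℂ := fderiv ℝ φ x ((1, 0), 0)

/-- The partial derivative `∂₂φ`. -/
def d2 (φ : R3 → ℂ) (x : R3) : ℂ := fderiv ℝ φ x ((0, 1), 0)

/-- The partial derivative `∂₃φ`. -/
def d3 (φ : R3 → ℂ) (x : R3) : ℂ := fderiv ℝ φ x ((0, 0), 1)

/-- The perpendicular part of the magnetic kinetic energy in the symmetric gauge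
`A(x) = ((-B/2)x₂, (B/2)x₁, 0)`:
`∫ (|−i∂₁φ−(B/2)x₂φ|² + |−i∂₂φ+(B/2)x₁φ|²) dx`. -/
def kinPerp (B : ℝ) (φ : R3 → ℂ) : ℝ :=
  ∫ x : R3, (‖-Complex.I * d1 φ x - ((B / 2 * x.1.2 : ℝ) : ℂ) * φ x‖ ^ 2
    + ‖-Complex.I * d2 φ x + ((B / 2 * x.1.1 : ℝ) : ℂ) * φ x‖ ^ 2)

/-- The full magnetic kinetic energy
`∫ (|−i∂₁φ−(B/2)x₂φ|² + |−i∂₂φ+(B/2)x₁φ|² + |∂₃φ|²) dx`. -/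
def kinEnergy (B : ℝ) (φ : R3 → ℂ) : ℝ :=
  ∫ x : R3, (‖-Complex.I * d1 φ x - ((B / 2 * x.1.2 : ℝ) : ℂ) * φ x‖ ^ 2
    + ‖-Complex.I * d2 φ x + ((B / 2 * x.1.1 : ℝ) : ℂ) * φ x‖ ^ 2
    + ‖d3 φ x‖ ^ 2)

/-- The Coulomb self-energy `∬ |φ(x)|²|φ(y)|²|x−y|⁻¹ dx dy` (without the factor 1/2). -/
def coulomb (φ : R3 → ℂ) : ℝ :=
  ∫ x : R3, ∫ y : R3, ‖φ x‖ ^ 2 * ‖φ y‖ ^ 2 / enorm3 (x - y)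

/-- `D(|φ|²,|φ|²) = (1/2) ∬ |φ(x)|²|φ(y)|²|x−y|⁻¹ dx dy`. -/
def Dself (φ : R3 → ℂ) : ℝ := (1 / 2) * coulomb φ

/-- The Pekar functional `E_{B,α}[φ]`. -/
def pekar (B α : ℝ) (φ : R3 → ℂ) : ℝ := kinEnergy B φ - α / 2 * coulomb φ

/-- `φ ∈ C_c^∞(ℝ³, ℂ)`. -/
def IsCcSmooth (φ : R3 → ℂ) : Prop := ContDiff ℝ (⊤ : ℕ∞) φ ∧ HasCompactSupport φ

/-- The Pekar ground state energy `E^c_{B,α}`, an infimum over normalized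
compactly supported smooth functions. -/
def groundE (B α : ℝ) : ℝ :=
  sInf {E : ℝ | ∃ φ : R3 → ℂ, IsCcSmooth φ ∧ (∫ x : R3, ‖φ x‖ ^ 2) = 1 ∧ E = pekar B α φ}

/-- The `L²(ℝ³)` norm `‖φ‖`. -/
def L2norm (φ : R3 → ℂ) : ℝ := Real.sqrt (∫ x : R3, ‖φ x‖ ^ 2)

/-- The `L²(ℝ³)` norm `‖∂₃φ‖`. -/
def L2normD3 (φ : R3 → ℂ) : ℝ := Real.sqrt (∫ x : R3, ‖d3 φ x‖ ^ 2)

/-- The kernel `K_B(x_⊥) = ln(1+√(1+(ln B)²|x_⊥|²)) − ln(√B |x_⊥|)` on `ℝ²`. -/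
def Kker (B : ℝ) (p : ℝ × ℝ) : ℝ :=
  Real.log (1 + Real.sqrt (1 + Real.log B ^ 2 * (p.1 ^ 2 + p.2 ^ 2)))
    - Real.log (Real.sqrt B * Real.sqrt (p.1 ^ 2 + p.2 ^ 2))

/-- The remainder term
`R_B^{(2)}(φ) = ∫_ℝ ∬_{ℝ²×ℝ²} |φ(x_⊥,x₃)|² |φ(y_⊥,x₃)|² K_B(x_⊥−y_⊥) dy_⊥ dx_⊥ dx₃`. -/
def R2err (B : ℝ) (φ : R3 → ℂ) : ℝ :=
  ∫ x3 : ℝ, ∫ xp : ℝ × ℝ, ∫ yp : ℝ × ℝ,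
    ‖φ (xp, x3)‖ ^ 2 * ‖φ (yp, x3)‖ ^ 2 * Kker B (xp - yp)

/-- The integral kernel of the lowest Landau level projection:
`P₀(x_⊥,y_⊥) = (B/(2π)) e^{−B|x_⊥−y_⊥|²/4} e^{iB(x₁y₂−x₂y₁)/2}`. -/
def P0ker (B : ℝ) (x y : ℝ × ℝ) : ℂ :=
  ((B / (2 * Real.pi) * Real.exp (-B * ((x.1 - y.1) ^ 2 + (x.2 - y.2) ^ 2) / 4) : ℝ) : ℂ)
    * Complex.exp (Complex.I * ((B * (x.1 * y.2 - x.2 * y.1) / 2 : ℝ) : ℂ))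

/-- The lowest Landau level projection acting on functions on `ℝ³` (in the `x_⊥` variables). -/
def P0 (B : ℝ) (φ : R3 → ℂ) : R3 → ℂ :=
  fun x => ∫ yp : ℝ × ℝ, P0ker B x.1 yp * φ (yp, x.2)

/-- `P_> φ = φ − P₀ φ`. -/
def Pgt (B : ℝ) (φ : R3 → ℂ) : R3 → ℂ := fun x => φ x - P0 B φ x

/-- The quadratic form of the two-dimensional Landau Hamiltonian
`H_B = (−i∂₁ + A₁)² + (−i∂₂ + A₂)²` in the symmetric gauge. -/
def kin2 (B : ℝ) (g : ℝ × ℝ → ℂ) : ℝ :=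
  ∫ x : ℝ × ℝ, (‖-Complex.I * fderiv ℝ g x (1, 0) - ((B / 2 * x.2 : ℝ) : ℂ) * g x‖ ^ 2
    + ‖-Complex.I * fderiv ℝ g x (0, 1) + ((B / 2 * x.1 : ℝ) : ℂ) * g x‖ ^ 2)

/-- The kernel `I_{k_⊥}(x_⊥,y_⊥) = P₀(x_⊥,y_⊥) e^{k_⊥∧(x_⊥−y_⊥)/2} e^{i k_⊥·(x_⊥+y_⊥)/2}`
with `a∧b = a₁b₂ − a₂b₁`. -/
def Iker (B : ℝ) (k x y : ℝ × ℝ) : ℂ :=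
  P0ker B x y * ((Real.exp ((k.1 * (x.2 - y.2) - k.2 * (x.1 - y.1)) / 2) : ℝ) : ℂ)
    * Complex.exp (Complex.I * (((k.1 * (x.1 + y.1) + k.2 * (x.2 + y.2)) / 2 : ℝ) : ℂ))

/-! helpers (tested) -/
lemma cs_sqrt {α : Type*} [MeasurableSpace α] {μ : Measure α} {f g : α → ℝ}
    (hf0 : ∀ a, 0 ≤ f a) (hg0 : ∀ a, 0 ≤ g a)
    (hf2 : MemLp f 2 μ) (hg2 : MemLp g 2 μ) :
    ∫ a, f a * g a ∂μ ≤ Real.sqrt (∫ a, f a ^ 2 ∂μ) * Real.sqrt (∫ a, g a ^ 2 ∂μ) := by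
  have hpq : Real.HolderConjugate 2 2 := Real.holderConjugate_iff.mpr ⟨one_lt_two, by norm_num⟩
  have h2 : ENNReal.ofReal (2:ℝ) = 2 := by norm_num
  have h := integral_mul_le_Lp_mul_Lq_of_nonneg hpq (Filter.Eventually.of_forall hf0)
    (Filter.Eventually.of_forall hg0) (h2 ▸ hf2) (h2 ▸ hg2)
  have hrw : ∀ u : α → ℝ, (∫ a, u a ^ (2:ℝ) ∂μ) ^ ((1:ℝ)/2) = Real.sqrt (∫ a, u a ^ 2 ∂μ) := by
    intro u
    rw [Real.sqrt_eq_rpow]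
    congr 1
    refine integral_congr_ae (Filter.Eventually.of_forall fun a => ?_)
    show u a ^ (2:ℝ) = u a ^ (2:ℕ)
    rw [← Real.rpow_natCast (u a) 2]; norm_num
  rw [hrw f, hrw g] at h
  exact h

lemma slice_zero1 {g : R3 → ℝ} {R : ℝ} (hz : ∀ x : R3, R ≤ ‖x‖ → g x = 0)
    (xp : ℝ × ℝ) (t : ℝ) (h : R ≤ ‖xp‖) : g (xp, t) = 0 :=
  hz _ (le_trans h (by rw [Prod.norm_def]; exact le_max_left _ _))

lemma slice_zero2 {g : R3 → ℝ} {R : ℝ} (hz : ∀ x : R3, R ≤ ‖x‖ → g x = 0)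
    (xp : ℝ × ℝ) (t : ℝ) (h : R ≤ |t|) : g (xp, t) = 0 :=
  hz _ (le_trans h (by rw [Prod.norm_def]; exact le_max_right _ _))

lemma slice_hcs {g : R3 → ℝ} {R : ℝ} (hz : ∀ x : R3, R ≤ ‖x‖ → g x = 0) (t : ℝ) :
    HasCompactSupport (fun xp => g (xp, t)) := by
  apply HasCompactSupport.intro (isCompact_closedBall (0 : ℝ × ℝ) |R|)
  intro xp hxp
  refine slice_zero1 hz xp t ?_
  simp only [Metric.mem_closedBall, dist_zero_right, not_le] at hxp
  exact le_trans (le_abs_self R) hxp.le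

lemma slice_integrable {g : R3 → ℝ} {R : ℝ} (hz : ∀ x : R3, R ≤ ‖x‖ → g x = 0)
    (hg : Continuous g) (t : ℝ) : Integrable (fun xp => g (xp, t)) :=
  (hg.comp (by fun_prop : Continuous fun xp : ℝ × ℝ => ((xp, t) : R3))).integrable_of_hasCompactSupport (slice_hcs hz t)

lemma slice_continuous {g : R3 → ℝ} {R : ℝ} (hz : ∀ x : R3, R ≤ ‖x‖ → g x = 0)
    (hg : Continuous g) (hgs : HasCompactSupport g) :
    Continuous (fun t => ∫ xp : ℝ × ℝ, g (xp, t)) := by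
  obtain ⟨C, hC⟩ := hgs.exists_bound_of_continuous hg
  apply continuous_of_dominated (bound := (Metric.closedBall (0:ℝ×ℝ) |R|).indicator (fun _ => |C|))
  · exact fun t => (hg.comp (by fun_prop : Continuous fun xp : ℝ × ℝ => ((xp, t) : R3))).aestronglyMeasurable
  · intro t
    refine Filter.Eventually.of_forall fun xp => ?_
    by_cases hxp : xp ∈ Metric.closedBall (0:ℝ×ℝ) |R|
    · rw [Set.indicator_of_mem hxp]
      exact le_trans (hC _) (le_abs_self C)
    · rw [Set.indicator_of_notMem hxp]
      have : g (xp, t) = 0 := by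
        refine slice_zero1 hz xp t ?_
        simp only [Metric.mem_closedBall, dist_zero_right, not_le] at hxp
        exact le_trans (le_abs_self R) hxp.le
      simp [this]
  · exact (integrable_indicator_iff measurableSet_closedBall).2
      (integrableOn_const measure_closedBall_lt_top.ne)
  · exact Filter.Eventually.of_forall fun xp =>
      hg.comp (by fun_prop : Continuous fun t : ℝ => ((xp, t) : R3))

lemma slice_int_zero {g : R3 → ℝ} {R : ℝ} (hz : ∀ x : R3, R ≤ ‖x‖ → g x = 0)
    (t : ℝ) (h : R ≤ |t|) : (∫ xp : ℝ × ℝ, g (xp, t)) = 0 := by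
  have : (fun xp : ℝ × ℝ => g (xp, t)) = fun _ => 0 := funext fun xp => slice_zero2 hz xp t h
  rw [this, integral_zero]

lemma slice_int_hcs {g : R3 → ℝ} {R : ℝ} (hz : ∀ x : R3, R ≤ ‖x‖ → g x = 0) :
    HasCompactSupport (fun t => ∫ xp : ℝ × ℝ, g (xp, t)) := by
  apply HasCompactSupport.intro (isCompact_Icc (a := -|R|) (b := |R|))
  intro t ht
  refine slice_int_zero hz t ?_
  simp only [Set.mem_Icc, not_and_or, not_le] at ht
  rcases ht with h | h
  · exact le_trans (le_abs_self R) (by rw [abs_of_neg (by linarith [abs_nonneg R] : t < 0)]; linarith)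
  · exact le_trans (le_abs_self R) (le_trans h.le (le_abs_self t))

lemma slice_fubini {g : R3 → ℝ} (hg : Continuous g) (hgs : HasCompactSupport g) :
    ∫ x : R3, g x = ∫ t : ℝ, ∫ xp : ℝ × ℝ, g (xp, t) := by
  have hint : Integrable g ((volume : Measure (ℝ × ℝ)).prod (volume : Measure ℝ)) :=
    hg.integrable_of_hasCompactSupport hgs
  calc ∫ x : R3, g x = ∫ xp : ℝ × ℝ, ∫ t : ℝ, g (xp, t) := MeasureTheory.integral_prod _ hint
    _ = ∫ t : ℝ, ∫ xp : ℝ × ℝ, g (xp, t) := MeasureTheory.integral_integral_swap hint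

lemma hasDerivAt_slice (φ : R3 → ℂ) (hd : Differentiable ℝ φ) (xp : ℝ × ℝ) (t : ℝ) :
    HasDerivAt (fun s => φ (xp, s)) (d3 φ (xp, t)) t := by
  have h1 : HasDerivAt (fun s : ℝ => ((xp, s) : R3)) (((0, 0), 1) : R3) t :=
    (hasDerivAt_const t xp).prodMk (hasDerivAt_id t)
  exact (hd (xp, t)).hasFDerivAt.comp_hasDerivAt t h1

lemma hasDerivAt_nsq (φ : R3 → ℂ) (hd : Differentiable ℝ φ) (xp : ℝ × ℝ) (t : ℝ) :
    HasDerivAt (fun s => ‖φ (xp, s)‖ ^ 2)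
      (2 * ((φ (xp, t)).re * (d3 φ (xp, t)).re + (φ (xp, t)).im * (d3 φ (xp, t)).im)) t := by
  have hu := hasDerivAt_slice φ hd xp t
  have hre : HasDerivAt (fun s => (φ (xp, s)).re) ((d3 φ (xp, t)).re) t :=
    Complex.reCLM.hasFDerivAt.comp_hasDerivAt t hu
  have him : HasDerivAt (fun s => (φ (xp, s)).im) ((d3 φ (xp, t)).im) t :=
    Complex.imCLM.hasFDerivAt.comp_hasDerivAt t hu
  have h := (hre.mul hre).add (him.mul him)
  have heq : (fun s => (φ (xp, s)).re * (φ (xp, s)).re + (φ (xp, s)).im * (φ (xp, s)).im)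
      = fun s => ‖φ (xp, s)‖ ^ 2 := by
    funext s
    rw [← Complex.normSq_apply, ← Complex.sq_norm]
  rw [← heq]
  exact h.congr_deriv (by ring)

lemma nsq_bound (z w : ℂ) : |2 * (z.re * w.re + z.im * w.im)| ≤ 2 * ‖z‖ * ‖w‖ := by
  have h1 : z.re * w.re + z.im * w.im = ((starRingEnd ℂ) z * w).re := by
    simp [Complex.mul_re]
  rw [abs_mul, h1, abs_two]
  have h2 : |((starRingEnd ℂ) z * w).re| ≤ ‖(starRingEnd ℂ) z * w‖ :=
    Complex.abs_re_le_norm _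
  rw [norm_mul, Complex.norm_conj] at h2
  calc 2 * |((starRingEnd ℂ) z * w).re| ≤ 2 * (‖z‖ * ‖w‖) := by linarith
    _ = 2 * ‖z‖ * ‖w‖ := by ring

/-! the σ integrand -/
noncomputable def sg (φ : R3 → ℂ) (x : R3) : ℝ :=
  2 * ((φ x).re * (d3 φ x).re + (φ x).im * (d3 φ x).im)


noncomputable def rho (φ : R3 → ℂ) (t : ℝ) : ℝ := ∫ xp : ℝ × ℝ, ‖φ (xp, t)‖ ^ 2
noncomputable def tau (φ : R3 → ℂ) (t : ℝ) : ℝ := ∫ xp : ℝ × ℝ, ‖d3 φ (xp, t)‖ ^ 2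
noncomputable def sig (φ : R3 → ℂ) (t : ℝ) : ℝ := ∫ xp : ℝ × ℝ, sg φ (xp, t)

set_option maxHeartbeats 4000000 in
lemma odr_main (φ : R3 → ℂ) (hsm : ContDiff ℝ (⊤ : ℕ∞) φ) (hcs : HasCompactSupport φ)
    (b : ℝ) (hb : 0 < b) :
    (∫ t : ℝ, tau φ t) - b * ∫ t : ℝ, (rho φ t) ^ 2
      ≥ -(b ^ 2 / 12) * (∫ t : ℝ, rho φ t) ^ 3 := by
  classical
  have hd : Differentiable ℝ φ := hsm.differentiable (by simp)
  have hc : Continuous φ := hsm.continuous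
  have hd3c : Continuous (d3 φ) := (hsm.continuous_fderiv (by simp)).clm_apply continuous_const
  have hd3cs : HasCompactSupport (d3 φ) :=
    (hcs.fderiv ℝ).comp_left (g := fun L : R3 →L[ℝ] ℂ => L ((0, 0), 1)) rfl
  -- choose R
  obtain ⟨R, hRpos, hRball⟩ :=
    ((hcs.isBounded.union hd3cs.isBounded).subset_ball_lt 0 0)
  have hzφ : ∀ x : R3, R ≤ ‖x‖ → φ x = 0 := by
    intro x hx
    by_contra h
    have hmem : x ∈ tsupport φ := subset_tsupport φ (by simpa using h)
    have := hRball (Set.mem_union_left _ hmem)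
    rw [Metric.mem_ball, dist_zero_right] at this
    linarith
  have hzd3 : ∀ x : R3, R ≤ ‖x‖ → d3 φ x = 0 := by
    intro x hx
    by_contra h
    have hmem : x ∈ tsupport (d3 φ) := subset_tsupport _ (by simpa using h)
    have := hRball (Set.mem_union_right _ hmem)
    rw [Metric.mem_ball, dist_zero_right] at this
    linarith
  -- the three integrands on R3
  have hg1c : Continuous (fun x : R3 => ‖φ x‖ ^ 2) := (hc.norm).pow 2
  have hg1cs : HasCompactSupport (fun x : R3 => ‖φ x‖ ^ 2) :=
    hcs.comp_left (g := fun z : ℂ => ‖z‖ ^ 2) (by simp)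
  have hz1 : ∀ x : R3, R ≤ ‖x‖ → ‖φ x‖ ^ 2 = 0 := fun x hx => by rw [hzφ x hx]; simp
  have hg2c : Continuous (fun x : R3 => ‖d3 φ x‖ ^ 2) := (hd3c.norm).pow 2
  have hg2cs : HasCompactSupport (fun x : R3 => ‖d3 φ x‖ ^ 2) :=
    hd3cs.comp_left (g := fun z : ℂ => ‖z‖ ^ 2) (by simp)
  have hz2 : ∀ x : R3, R ≤ ‖x‖ → ‖d3 φ x‖ ^ 2 = 0 := fun x hx => by rw [hzd3 x hx]; simp
  have hg3c : Continuous (sg φ) := by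
    unfold sg
    fun_prop
  have hz3 : ∀ x : R3, R ≤ ‖x‖ → sg φ x = 0 := fun x hx => by
    unfold sg; rw [hzφ x hx]; simp
  have hg3cs : HasCompactSupport (sg φ) := by
    apply HasCompactSupport.intro hcs
    intro x hx
    have : φ x = 0 := image_eq_zero_of_notMem_tsupport hx
    unfold sg; rw [this]; simp
  -- continuity, integrability, support of ρ, τ, σ
  have hρc : Continuous (rho φ) := slice_continuous hz1 hg1c hg1cs
  have hτc : Continuous (tau φ) := slice_continuous hz2 hg2c hg2cs
  have hσc : Continuous (sig φ) := slice_continuous hz3 hg3c hg3cs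
  have hρhcs : HasCompactSupport (rho φ) := slice_int_hcs hz1
  have hτhcs : HasCompactSupport (tau φ) := slice_int_hcs hz2
  have hσhcs : HasCompactSupport (sig φ) := slice_int_hcs hz3
  have hρint : Integrable (rho φ) := hρc.integrable_of_hasCompactSupport hρhcs
  have hτint : Integrable (tau φ) := hτc.integrable_of_hasCompactSupport hτhcs
  have hρ0 : ∀ t, 0 ≤ rho φ t := fun t => integral_nonneg (fun xp => by positivity)
  have hτ0 : ∀ t, 0 ≤ tau φ t := fun t => integral_nonneg (fun xp => by positivity)
  have hρzero : ∀ t : ℝ, R ≤ |t| → rho φ t = 0 := fun t ht => slice_int_zero hz1 t ht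
  have hσzero : ∀ t : ℝ, R ≤ |t| → sig φ t = 0 := fun t ht => slice_int_zero hz3 t ht
  obtain ⟨M, hMdef⟩ : ∃ m : ℝ, m = ∫ t : ℝ, rho φ t := ⟨_, rfl⟩
  obtain ⟨T, hTdef⟩ : ∃ m : ℝ, m = ∫ t : ℝ, tau φ t := ⟨_, rfl⟩
  have hM0 : 0 ≤ M := hMdef ▸ integral_nonneg hρ0
  have hT0 : 0 ≤ T := hTdef ▸ integral_nonneg hτ0
  -- derivative of rho
  have hρderiv : ∀ t : ℝ, HasDerivAt (rho φ) (sig φ t) t := by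
    intro t₀
    obtain ⟨C1, hC1⟩ := hcs.exists_bound_of_continuous hc
    obtain ⟨C2, hC2⟩ := hd3cs.exists_bound_of_continuous hd3c
    have hC10 : 0 ≤ C1 := le_trans (norm_nonneg _) (hC1 ((0,0),0))
    have hC20 : 0 ≤ C2 := le_trans (norm_nonneg _) (hC2 ((0,0),0))
    have key := hasDerivAt_integral_of_dominated_loc_of_deriv_le
      (F := fun s (xp : ℝ × ℝ) => ‖φ (xp, s)‖ ^ 2)
      (F' := fun s (xp : ℝ × ℝ) => sg φ (xp, s))
      (x₀ := t₀)
      (bound := (Metric.closedBall (0:ℝ×ℝ) |R|).indicator (fun _ => 2 * C1 * C2))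
      (Metric.ball_mem_nhds t₀ one_pos)
      (Filter.Eventually.of_forall fun s =>
        ((hg1c.comp (by fun_prop : Continuous fun xp : ℝ × ℝ => ((xp, s) : R3))).aestronglyMeasurable))
      (slice_integrable hz1 hg1c t₀)
      ((hg3c.comp (by fun_prop : Continuous fun xp : ℝ × ℝ => ((xp, t₀) : R3))).aestronglyMeasurable)
      ?_ ?_ ?_
    · exact key.2
    · refine Filter.Eventually.of_forall fun xp => fun s _ => ?_
      by_cases hxp : xp ∈ Metric.closedBall (0:ℝ×ℝ) |R|
      · rw [Set.indicator_of_mem hxp]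
        have h1 : |sg φ (xp, s)| ≤ 2 * ‖φ (xp, s)‖ * ‖d3 φ (xp, s)‖ := nsq_bound _ _
        refine le_trans h1 ?_
        have := hC1 (xp, s); have := hC2 (xp, s)
        have h2 : ‖φ (xp, s)‖ * ‖d3 φ (xp, s)‖ ≤ C1 * C2 :=
          mul_le_mul (hC1 _) (hC2 _) (norm_nonneg _) hC10
        calc 2 * ‖φ (xp, s)‖ * ‖d3 φ (xp, s)‖ = 2 * (‖φ (xp, s)‖ * ‖d3 φ (xp, s)‖) := by ring
          _ ≤ 2 * (C1 * C2) := by linarith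
          _ = 2 * C1 * C2 := by ring
      · rw [Set.indicator_of_notMem hxp]
        have hout : R ≤ ‖xp‖ := by
          simp only [Metric.mem_closedBall, dist_zero_right, not_le] at hxp
          exact le_trans (le_abs_self R) hxp.le
        have : sg φ (xp, s) = 0 := slice_zero1 hz3 xp s hout
        simp [this]
    · exact (integrable_indicator_iff measurableSet_closedBall).2
        (integrableOn_const measure_closedBall_lt_top.ne)
    · exact Filter.Eventually.of_forall fun xp => fun s _ => hasDerivAt_nsq φ hd xp s
  -- pointwise bound |σ| ≤ 2 √ρ √τ
  have hσbound : ∀ t : ℝ, |sig φ t| ≤ 2 * (Real.sqrt (rho φ t) * Real.sqrt (tau φ t)) := by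
    intro t
    have h1 : |sig φ t| ≤ ∫ xp : ℝ × ℝ, |sg φ (xp, t)| := by
      simpa [Real.norm_eq_abs, sig] using
        norm_integral_le_integral_norm (fun xp : ℝ × ℝ => sg φ (xp, t))
    have h2 : (∫ xp : ℝ × ℝ, |sg φ (xp, t)|)
        ≤ ∫ xp : ℝ × ℝ, 2 * (‖φ (xp, t)‖ * ‖d3 φ (xp, t)‖) := by
      refine integral_mono ((slice_integrable hz3 hg3c t).abs) ?_ ?_
      · have : Continuous (fun x : R3 => 2 * (‖φ x‖ * ‖d3 φ x‖)) := by fun_prop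
        exact slice_integrable (R := R) (g := fun x : R3 => 2 * (‖φ x‖ * ‖d3 φ x‖))
          (fun x hx => by simp [hzφ x hx]) this t
      · intro xp
        have := nsq_bound (φ (xp, t)) (d3 φ (xp, t))
        calc |sg φ (xp, t)| ≤ 2 * ‖φ (xp, t)‖ * ‖d3 φ (xp, t)‖ := this
          _ = 2 * (‖φ (xp, t)‖ * ‖d3 φ (xp, t)‖) := by ring
    have h3 : (∫ xp : ℝ × ℝ, 2 * (‖φ (xp, t)‖ * ‖d3 φ (xp, t)‖))
        = 2 * ∫ xp : ℝ × ℝ, ‖φ (xp, t)‖ * ‖d3 φ (xp, t)‖ := integral_const_mul 2 _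
    have h4 : (∫ xp : ℝ × ℝ, ‖φ (xp, t)‖ * ‖d3 φ (xp, t)‖)
        ≤ Real.sqrt (rho φ t) * Real.sqrt (tau φ t) := by
      have hf2 : MemLp (fun xp : ℝ × ℝ => ‖φ (xp, t)‖) 2 volume := by
        apply Continuous.memLp_of_hasCompactSupport
          (hf := (hc.comp (by fun_prop : Continuous fun xp : ℝ × ℝ => ((xp, t) : R3))).norm)
        apply HasCompactSupport.intro (isCompact_closedBall (0 : ℝ × ℝ) |R|)
        intro xp hxp
        have hout : R ≤ ‖xp‖ := by
          simp only [Metric.mem_closedBall, dist_zero_right, not_le] at hxp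
          exact le_trans (le_abs_self R) hxp.le
        have hz : φ (xp, t) = 0 :=
          hzφ _ (le_trans hout (by rw [Prod.norm_def]; exact le_max_left _ _))
        simp [hz]
      have hg2m : MemLp (fun xp : ℝ × ℝ => ‖d3 φ (xp, t)‖) 2 volume := by
        apply Continuous.memLp_of_hasCompactSupport
          (hf := (hd3c.comp (by fun_prop : Continuous fun xp : ℝ × ℝ => ((xp, t) : R3))).norm)
        apply HasCompactSupport.intro (isCompact_closedBall (0 : ℝ × ℝ) |R|)
        intro xp hxp
        have hout : R ≤ ‖xp‖ := by
          simp only [Metric.mem_closedBall, dist_zero_right, not_le] at hxp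
          exact le_trans (le_abs_self R) hxp.le
        have hz : d3 φ (xp, t) = 0 :=
          hzd3 _ (le_trans hout (by rw [Prod.norm_def]; exact le_max_left _ _))
        simp [hz]
      exact cs_sqrt (fun xp => norm_nonneg _) (fun xp => norm_nonneg _) hf2 hg2m
    calc |sig φ t| ≤ ∫ xp : ℝ × ℝ, |sg φ (xp, t)| := h1
      _ ≤ ∫ xp : ℝ × ℝ, 2 * (‖φ (xp, t)‖ * ‖d3 φ (xp, t)‖) := h2
      _ = 2 * ∫ xp : ℝ × ℝ, ‖φ (xp, t)‖ * ‖d3 φ (xp, t)‖ := h3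
      _ ≤ 2 * (Real.sqrt (rho φ t) * Real.sqrt (tau φ t)) := by linarith
  -- helpers for functions on the line vanishing for R ≤ |t|
  have hRR : -R ≤ R := by linarith
  have habs : ∀ t : ℝ, t ∉ Set.Ioc (-R) R → R ≤ |t| := by
    intro t ht
    simp only [Set.mem_Ioc, not_and_or, not_lt, not_le] at ht
    rcases ht with h | h
    · rw [abs_of_nonpos (by linarith)]; linarith
    · exact le_trans h.le (le_abs_self t)
  have hconv : ∀ h : ℝ → ℝ, (∀ t, R ≤ |t| → h t = 0) → ∫ t in (-R)..R, h t = ∫ t, h t := by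
    intro h hh
    rw [intervalIntegral.integral_of_le hRR]
    exact setIntegral_eq_integral_of_forall_compl_eq_zero fun s hs => hh s (habs s hs)
  have hlinehcs : ∀ h : ℝ → ℝ, (∀ t, R ≤ |t| → h t = 0) → HasCompactSupport h := by
    intro h hh
    apply HasCompactSupport.intro (isCompact_Icc (a := -R) (b := R))
    intro t ht
    refine hh t ?_
    simp only [Set.mem_Icc, not_and_or, not_le] at ht
    rcases ht with h' | h'
    · rw [abs_of_neg (by linarith)]; linarith
    · exact le_trans h'.le (le_abs_self t)
  -- the primitive F
  set F : ℝ → ℝ := fun t => ∫ s in (-R)..t, rho φ s with hFdef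
  have hFderiv : ∀ t : ℝ, HasDerivAt F (rho φ t) t := fun t =>
    intervalIntegral.integral_hasDerivAt_right (hρc.intervalIntegrable _ _)
      (hρc.stronglyMeasurableAtFilter _ _) hρc.continuousAt
  have hFcont : Continuous F := continuous_iff_continuousAt.2 fun t => (hFderiv t).continuousAt
  have hFmR : F (-R) = 0 := intervalIntegral.integral_same
  have hFR : F R = M := by
    rw [hMdef, hFdef]
    exact hconv _ hρzero
  -- integration by parts
  have hH : ∀ t : ℝ, HasDerivAt (fun t => rho φ t * (F t - M / 2))
      (sig φ t * (F t - M / 2) + rho φ t * rho φ t) t :=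
    fun t => (hρderiv t).mul ((hFderiv t).sub_const (M / 2))
  have hσFc : Continuous fun t => sig φ t * (F t - M / 2) :=
    hσc.mul (hFcont.sub continuous_const)
  have hparts0 : ∫ t in (-R)..R, (sig φ t * (F t - M / 2) + rho φ t * rho φ t) = 0 := by
    rw [intervalIntegral.integral_eq_sub_of_hasDerivAt (fun t _ => hH t)
      ((hσFc.add (hρc.mul hρc)).intervalIntegrable _ _)]
    rw [hρzero R (by rw [abs_of_pos hRpos]), hρzero (-R) (by rw [abs_neg, abs_of_pos hRpos])]
    ring
  have hsplit : (∫ t in (-R)..R, sig φ t * (F t - M / 2))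
      + (∫ t in (-R)..R, rho φ t * rho φ t) = 0 := by
    rw [← intervalIntegral.integral_add (f := fun t => sig φ t * (F t - M / 2)) (g := fun t => rho φ t * rho φ t) (hσFc.intervalIntegrable _ _)
      ((hρc.mul hρc).intervalIntegrable _ _)]
    exact hparts0
  have hzρ2 : ∀ t, R ≤ |t| → rho φ t * rho φ t = 0 := fun t ht => by rw [hρzero t ht]; ring
  have hzσF : ∀ t, R ≤ |t| → sig φ t * (F t - M / 2) = 0 := fun t ht => by
    rw [hσzero t ht]; ring
  have hkey1 : (∫ t : ℝ, rho φ t * rho φ t) = - ∫ t : ℝ, sig φ t * (F t - M / 2) := by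
    have e1 := hconv _ hzρ2
    have e2 := hconv _ hzσF
    linarith [hsplit, e1, e2]
  -- FTC for the cube
  have hG : ∀ t : ℝ, HasDerivAt (fun t => (F t - M / 2) ^ 3 / 3)
      ((F t - M / 2) ^ 2 * rho φ t) t := by
    intro t
    have h := (((hFderiv t).sub_const (M / 2)).pow 3).div_const 3
    exact h.congr_deriv (by simp only [Nat.cast_ofNat, show (3:ℕ) - 1 = 2 from rfl]; ring)
  have hcubeline : ∀ t, R ≤ |t| → (F t - M / 2) ^ 2 * rho φ t = 0 := fun t ht => by
    rw [hρzero t ht]; ring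
  have hcube : ∫ t : ℝ, (F t - M / 2) ^ 2 * rho φ t = M ^ 3 / 12 := by
    rw [← hconv _ hcubeline]
    rw [intervalIntegral.integral_eq_sub_of_hasDerivAt (fun t _ => hG t)
      ((((hFcont.sub continuous_const).pow 2).mul hρc).intervalIntegrable _ _)]
    rw [hFR, hFmR]
    ring
  -- Cauchy–Schwarz over the line
  set W : ℝ → ℝ := fun t => Real.sqrt (tau φ t) * (2 * Real.sqrt (rho φ t) * |F t - M / 2|)
    with hWdef
  have hWcont : Continuous W :=
    (Real.continuous_sqrt.comp hτc).mul
      ((continuous_const.mul (Real.continuous_sqrt.comp hρc)).mul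
        ((hFcont.sub continuous_const).abs))
  have hτsqrtz : ∀ t, R ≤ |t| → Real.sqrt (tau φ t) = 0 := fun t ht => by
    rw [show tau φ t = 0 from slice_int_zero hz2 t ht, Real.sqrt_zero]
  have hWz : ∀ t, R ≤ |t| → W t = 0 := fun t ht => by
    rw [hWdef]; simp only []
    rw [hρzero t ht, Real.sqrt_zero]; ring
  have hstep1 : (∫ t : ℝ, rho φ t * rho φ t) ≤ ∫ t : ℝ, W t := by
    rw [hkey1]
    have hWint : Integrable W := hWcont.integrable_of_hasCompactSupport (hlinehcs _ hWz)
    have hσFint : Integrable (fun t => sig φ t * (F t - M / 2)) :=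
      hσFc.integrable_of_hasCompactSupport (hlinehcs _ hzσF)
    have hmono : ∀ t : ℝ, - (sig φ t * (F t - M / 2)) ≤ W t := by
      intro t
      have h1 : - (sig φ t * (F t - M / 2)) ≤ |sig φ t * (F t - M / 2)| := neg_le_abs _
      refine le_trans h1 ?_
      rw [abs_mul]
      have h2 := hσbound t
      have h3 : (0:ℝ) ≤ |F t - M / 2| := abs_nonneg _
      have h4 : (0:ℝ) ≤ |sig φ t| := abs_nonneg _
      calc |sig φ t| * |F t - M / 2|
          ≤ (2 * (Real.sqrt (rho φ t) * Real.sqrt (tau φ t))) * |F t - M / 2| :=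
            mul_le_mul_of_nonneg_right h2 h3
        _ = W t := by rw [hWdef]; ring
    calc - ∫ t : ℝ, sig φ t * (F t - M / 2) = ∫ t : ℝ, - (sig φ t * (F t - M / 2)) := by
          rw [integral_neg]
      _ ≤ ∫ t : ℝ, W t := integral_mono hσFint.neg hWint hmono
  have hstep2 : (∫ t : ℝ, W t) ≤ Real.sqrt T * Real.sqrt (M ^ 3 / 3) := by
    have hf0 : ∀ t : ℝ, 0 ≤ Real.sqrt (tau φ t) := fun t => Real.sqrt_nonneg _
    have hg0 : ∀ t : ℝ, 0 ≤ 2 * Real.sqrt (rho φ t) * |F t - M / 2| := fun t => by positivity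
    have hfc : Continuous fun t => Real.sqrt (tau φ t) := Real.continuous_sqrt.comp hτc
    have hgc : Continuous fun t => 2 * Real.sqrt (rho φ t) * |F t - M / 2| :=
      (continuous_const.mul (Real.continuous_sqrt.comp hρc)).mul
        ((hFcont.sub continuous_const).abs)
    have hf2 : MemLp (fun t => Real.sqrt (tau φ t)) 2 volume :=
      hfc.memLp_of_hasCompactSupport (hlinehcs _ hτsqrtz)
    have hg2 : MemLp (fun t => 2 * Real.sqrt (rho φ t) * |F t - M / 2|) 2 volume :=
      hgc.memLp_of_hasCompactSupport (hlinehcs _ (fun t ht => by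
        rw [hρzero t ht, Real.sqrt_zero]; ring))
    have hcs2 := cs_sqrt hf0 hg0 hf2 hg2
    have e1 : (∫ t : ℝ, Real.sqrt (tau φ t) ^ 2) = T := by
      rw [hTdef]

      exact integral_congr_ae (Filter.Eventually.of_forall fun t => Real.sq_sqrt (hτ0 t))
    have e2 : (∫ t : ℝ, (2 * Real.sqrt (rho φ t) * |F t - M / 2|) ^ 2) = M ^ 3 / 3 := by
      have : ∀ t : ℝ, (2 * Real.sqrt (rho φ t) * |F t - M / 2|) ^ 2
          = 4 * ((F t - M / 2) ^ 2 * rho φ t) := by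
        intro t
        rw [mul_pow, mul_pow, sq_abs, Real.sq_sqrt (hρ0 t)]
        ring
      rw [integral_congr_ae (Filter.Eventually.of_forall this), integral_const_mul, hcube]
      ring
    calc (∫ t : ℝ, W t)
        = ∫ t : ℝ, Real.sqrt (tau φ t) * (2 * Real.sqrt (rho φ t) * |F t - M / 2|) := by
          rw [hWdef]
      _ ≤ Real.sqrt (∫ t : ℝ, Real.sqrt (tau φ t) ^ 2)
          * Real.sqrt (∫ t : ℝ, (2 * Real.sqrt (rho φ t) * |F t - M / 2|) ^ 2) := hcs2
      _ = Real.sqrt T * Real.sqrt (M ^ 3 / 3) := by rw [e1, e2]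
  -- conclude
  have hIle : (∫ t : ℝ, rho φ t * rho φ t) ≤ Real.sqrt T * Real.sqrt (M ^ 3 / 3) :=
    le_trans hstep1 hstep2
  have hsq3 : Real.sqrt (M ^ 3 / 3) = 2 * Real.sqrt (M ^ 3 / 12) := by
    have h12 : (0:ℝ) ≤ M ^ 3 / 12 := by positivity
    rw [show M ^ 3 / 3 = 4 * (M ^ 3 / 12) by ring, Real.sqrt_mul (by norm_num) _,
      show Real.sqrt 4 = 2 by
        rw [show (4:ℝ) = 2 ^ 2 by norm_num, Real.sqrt_sq (by norm_num)]]
  have hρ2eq : (∫ t : ℝ, rho φ t ^ 2) = ∫ t : ℝ, rho φ t * rho φ t :=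
    integral_congr_ae (Filter.Eventually.of_forall fun t => by ring)
  have hsqT := Real.sq_sqrt hT0
  have hsqM := Real.sq_sqrt (show (0:ℝ) ≤ M ^ 3 / 12 by positivity)
  have hfin : b * (∫ t : ℝ, rho φ t * rho φ t) ≤ T + b ^ 2 * (M ^ 3 / 12) := by
    have h1 : b * (∫ t : ℝ, rho φ t * rho φ t) ≤ b * (Real.sqrt T * Real.sqrt (M ^ 3 / 3)) :=
      mul_le_mul_of_nonneg_left hIle hb.le
    rw [hsq3] at h1
    have key2 : (0:ℝ) ≤ (Real.sqrt T - b * Real.sqrt (M ^ 3 / 12)) ^ 2 := sq_nonneg _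
    have expand : (Real.sqrt T - b * Real.sqrt (M ^ 3 / 12)) ^ 2
        = T - 2 * Real.sqrt T * (b * Real.sqrt (M ^ 3 / 12)) + b ^ 2 * (M ^ 3 / 12) := by
      rw [sub_sq, mul_pow, hsqT, hsqM]
    rw [expand] at key2
    linarith only [h1, key2]
  rw [hρ2eq, ← hTdef, ← hMdef]
  linarith only [hfin]

/-- Corollary: sharp lower bound for general (not necessarily product) functions. -/
theorem one_dim_reduction_bound (φ : R3 → ℂ) (hφ : IsCcSmooth φ) (b : ℝ) (hb : 0 < b) :
    (∫ x : R3, ‖d3 φ x‖ ^ 2)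
        - b * ∫ x3 : ℝ, (∫ xp : ℝ × ℝ, ‖φ (xp, x3)‖ ^ 2) ^ 2
      ≥ -(b ^ 2 / 12) * L2norm φ ^ 6 := by
  obtain ⟨hsm, hcs⟩ := hφ
  have main := odr_main φ hsm hcs b hb
  have hc : Continuous φ := hsm.continuous
  have hd3c : Continuous (d3 φ) := (hsm.continuous_fderiv (by simp)).clm_apply continuous_const
  have hd3cs : HasCompactSupport (d3 φ) :=
    (hcs.fderiv ℝ).comp_left (g := fun L : R3 →L[ℝ] ℂ => L ((0, 0), 1)) rfl
  have hg1c : Continuous (fun x : R3 => ‖φ x‖ ^ 2) := (hc.norm).pow 2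
  have hg1cs : HasCompactSupport (fun x : R3 => ‖φ x‖ ^ 2) :=
    hcs.comp_left (g := fun z : ℂ => ‖z‖ ^ 2) (by simp)
  have hg2c : Continuous (fun x : R3 => ‖d3 φ x‖ ^ 2) := (hd3c.norm).pow 2
  have hg2cs : HasCompactSupport (fun x : R3 => ‖d3 φ x‖ ^ 2) :=
    hd3cs.comp_left (g := fun z : ℂ => ‖z‖ ^ 2) (by simp)
  have hT : (∫ x : R3, ‖d3 φ x‖ ^ 2) = ∫ t : ℝ, tau φ t := slice_fubini hg2c hg2cs
  have hM : (∫ x : R3, ‖φ x‖ ^ 2) = ∫ t : ℝ, rho φ t := slice_fubini hg1c hg1cs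
  have ha0 : 0 ≤ ∫ x : R3, ‖φ x‖ ^ 2 := integral_nonneg fun x => by positivity
  have h6 : L2norm φ ^ 6 = (∫ x : R3, ‖φ x‖ ^ 2) ^ 3 := by
    rw [L2norm, show (6 : ℕ) = 2 * 3 from rfl, pow_mul, Real.sq_sqrt ha0]
  rw [hT, h6, hM]
  exact main
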